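/- Let Ĥ be a weakly balanced bipartite signed graph (no purely red edges) whose underlying graph H is a bipartite chain graph. Then Ĥ has a special min ordering if and only if Ĥ contains none of the following three signed graphs as an induced subgraph: (A) a 4-cycle whose edges alternate blue and bicoloured; (B) an induced path on four vertices whose two end edges are bicoloured and whose middle edge is blue; (C) the graph on six vertices a, d, e in one part and b, c, f in the other, with all nine possible edges present except dc, where the edges ac, af, df are bicoloured and the edges ab, db, eb, ec, ef are blue. -/

import Mathlib

variable {A B : Type*}

/-- A min ordering of a bipartite graph: a pair of linear (strict total) orders on the
two parts such that if `ab`, `a'b'` are edges with `a <_A a'` and `b' <_B b`, then `ab'`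
is an edge. -/
def IsMinOrdering (E : A → B → Prop) (ltA : A → A → Prop) (ltB : B → B → Prop) : Prop :=
  IsStrictTotalOrder A ltA ∧ IsStrictTotalOrder B ltB ∧
    ∀ a a' b b', E a b → E a' b' → ltA a a' → ltB b' b → E a b'

/-- A special min ordering of a weakly balanced bipartite signed graph: a min ordering
such that at each vertex all bicoloured neighbours precede all blue neighbours. -/
def IsSpecialMinOrdering (E bic : A → B → Prop)
    (ltA : A → A → Prop) (ltB : B → B → Prop) : Prop :=
  IsMinOrdering E ltA ltB ∧
    (∀ (a : A) (b b' : B), bic a b → E a b' → ¬ bic a b' → ltB b b') ∧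
    (∀ (b : B) (a a' : A), bic a b → E a' b → ¬ bic a' b → ltA a a')

/-- Forbidden graph (A): an induced 4-cycle `a, b, a', b'` whose edges alternate
blue and bicoloured. -/
def PatternA (E bic : A → B → Prop) : Prop :=
  ∃ (a a' : A) (b b' : B), a ≠ a' ∧ b ≠ b' ∧
    E a b ∧ E a' b ∧ E a' b' ∧ E a b' ∧
    ¬ bic a b ∧ bic a' b ∧ ¬ bic a' b' ∧ bic a b'

/-- Forbidden graph (B): an induced path `b, a, b', a'` on four vertices whose two end
edges (`ab` and `a'b'`) are bicoloured and whose middle edge (`ab'`) is blue. -/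
def PatternB (E bic : A → B → Prop) : Prop :=
  ∃ (a a' : A) (b b' : B), a ≠ a' ∧ b ≠ b' ∧
    E a b ∧ E a b' ∧ E a' b' ∧ ¬ E a' b ∧
    bic a b ∧ ¬ bic a b' ∧ bic a' b'

/-- Forbidden graph (C): six vertices `a, d, e` in one part and `b, c, f` in the other,
with all nine possible edges present except `dc`, where `ac`, `af`, `df` are bicoloured
and `ab`, `db`, `eb`, `ec`, `ef` are blue. -/
def PatternC (E bic : A → B → Prop) : Prop :=
  ∃ (a d e : A) (b c f : B),
    a ≠ d ∧ a ≠ e ∧ d ≠ e ∧ b ≠ c ∧ b ≠ f ∧ c ≠ f ∧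
    E a b ∧ E a c ∧ E a f ∧ E d b ∧ E d f ∧ E e b ∧ E e c ∧ E e f ∧ ¬ E d c ∧
    bic a c ∧ bic a f ∧ bic d f ∧
    ¬ bic a b ∧ ¬ bic d b ∧ ¬ bic e b ∧ ¬ bic e c ∧ ¬ bic e f

namespace Statement19Aux

/-! ### Generic order-theoretic helpers -/

lemma sto_asymm {α : Type*} {lt : α → α → Prop} (h : IsStrictTotalOrder α lt)
    {a b : α} (h1 : lt a b) (h2 : lt b a) : False :=
  h.toIsStrictOrder.toIrrefl.irrefl a (h.toIsStrictOrder.toIsTrans.trans _ _ _ h1 h2)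

/-- Any strict partial order extends to a strict total order. -/
lemma exists_sto_ext {α : Type*} (s : α → α → Prop)
    (hirr : ∀ a, ¬ s a a) (htr : ∀ a b c, s a b → s b c → s a c) :
    ∃ lt : α → α → Prop, IsStrictTotalOrder α lt ∧ ∀ a b, s a b → lt a b := by
  haveI hpo : IsPartialOrder α (fun a b => s a b ∨ a = b) :=
    { refl := fun a => Or.inr rfl
      trans := by
        rintro a b c (h1 | rfl) h2
        · rcases h2 with h2 | rfl
          · exact Or.inl (htr _ _ _ h1 h2)
          · exact Or.inl h1
        · exact h2
      antisymm := by
        rintro a b (h1 | rfl) h2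
        · rcases h2 with h2 | rfl
          · exact absurd (htr _ _ _ h1 h2) (hirr a)
          · rfl
        · rfl }
  obtain ⟨t, ht, hle⟩ := extend_partialOrder (fun a b => s a b ∨ a = b)
  have ttrans : ∀ {a b c}, t a b → t b c → t a c := fun h1 h2 =>
    ht.toIsPartialOrder.toIsPreorder.toIsTrans.trans _ _ _ h1 h2
  have tanti : ∀ {a b}, t a b → t b a → a = b := fun h1 h2 =>
    ht.toIsPartialOrder.toAntisymm.antisymm _ _ h1 h2
  have ttotal : ∀ a b, t a b ∨ t b a := ht.toTotal.total
  refine ⟨fun a b => t a b ∧ a ≠ b, ?_,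
    fun a b hs => ⟨hle _ _ (Or.inl hs), fun h => hirr a (h ▸ hs)⟩⟩
  exact
    { trichotomous := by
        intro a b h1 h2
        by_contra hab
        rcases ttotal a b with h | h
        · exact h1 ⟨h, hab⟩
        · exact h2 ⟨h, fun hba => hab hba.symm⟩
      irrefl := fun a h => h.2 rfl
      trans := by
        rintro a b c ⟨h1, hne1⟩ ⟨h2, hne2⟩
        refine ⟨ttrans h1 h2, fun hac => ?_⟩
        subst hac
        exact hne1 (tanti h1 h2) }

/-! ### Forward direction: a special min ordering excludes the patterns -/

lemma smo_flip {E bic : A → B → Prop} {ltA : A → A → Prop} {ltB : B → B → Prop}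
    (h : IsSpecialMinOrdering E bic ltA ltB) :
    IsSpecialMinOrdering (fun b a => E a b) (fun b a => bic a b) ltB ltA := by
  obtain ⟨⟨hA, hB, hmin⟩, hsB, hsA⟩ := h
  exact ⟨⟨hB, hA, fun b b' a a' h1 h2 hb ha => hmin a' a b' b h2 h1 ha hb⟩,
    fun b a a' h1 h2 h3 => hsA b a a' h1 h2 h3,
    fun a b b' h1 h2 h3 => hsB a b b' h1 h2 h3⟩

lemma smo_noA {E bic : A → B → Prop} {ltA : A → A → Prop} {ltB : B → B → Prop}
    (h : IsSpecialMinOrdering E bic ltA ltB) : ¬ PatternA E bic := by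
  rintro ⟨a, a', b, b', -, -, e1, e2, e3, e4, n1, c2, n3, c4⟩
  exact sto_asymm h.1.2.1 (h.2.1 a b' b c4 e1 n1) (h.2.1 a' b b' c2 e3 n3)

lemma smo_noB {E bic : A → B → Prop} {ltA : A → A → Prop} {ltB : B → B → Prop}
    (h : IsSpecialMinOrdering E bic ltA ltB) : ¬ PatternB E bic := by
  rintro ⟨a, a', b, b', -, -, e1, e2, e3, ne4, c1, n2, c3⟩
  exact ne4 (h.1.2.2 a' a b' b e3 e1 (h.2.2 b' a' a c3 e2 n2) (h.2.1 a b b' c1 e2 n2))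

lemma smo_noC {E bic : A → B → Prop} {ltA : A → A → Prop} {ltB : B → B → Prop}
    (h : IsSpecialMinOrdering E bic ltA ltB) : ¬ PatternC E bic := by
  rintro ⟨a, d, e, b, c, f, -, -, -, -, -, -, eab, eac, eaf, edb, edf, eeb, eec, eef,
    nedc, cac, caf, cdf, nab, ndb, neb, nec, nef⟩
  exact nedc (h.1.2.2 d e b c edb eec (h.2.2 f d e cdf eef nef) (h.2.1 a c b cac eab nab))

/-! ### Backward direction: auxiliary relations -/

section Backward

variable (E bic : A → B → Prop)

/-- Special-ordering constraint on `B`: `b` must precede `b'`. -/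
def sRB (b b' : B) : Prop := ∃ a, bic a b ∧ E a b' ∧ ¬ bic a b'

/-- Special-ordering constraint on `A`: `a` must precede `a'`. -/
def sRA (a a' : A) : Prop := ∃ b, bic a b ∧ E a' b ∧ ¬ bic a' b

/-- Default ordering on `A`: strictly larger neighbourhood first, unless reversed
by a special constraint. -/
def sDA (a a' : A) : Prop :=
  (∀ b, E a' b → E a b) ∧ (∃ b, E a b ∧ ¬ E a' b) ∧ ¬ sRA E bic a' a

/-- Coupling constraints on `B` coming from the min-ordering condition and forced
inversions on `A`. -/
def sT (b b' : B) : Prop := ∃ a a', sRA E bic a a' ∧ E a b ∧ E a' b' ∧ ¬ E a b'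

variable {E bic}

lemma sRB_irrefl (b : B) : ¬ sRB E bic b b := fun ⟨_, h1, _, h3⟩ => h3 h1

lemma sRA_irrefl (a : A) : ¬ sRA E bic a a := fun ⟨_, h1, _, h3⟩ => h3 h1

lemma sRA_flip {a a' : A} :
    sRA E bic a a' ↔ sRB (fun b a => E a b) (fun b a => bic a b) a a' := Iff.rfl

lemma sRB_trans (hbic : ∀ a b, bic a b → E a b)
    (hcmpA : ∀ a a' : A, (∀ b, E a b → E a' b) ∨ (∀ b, E a' b → E a b))
    (noA : ¬ PatternA E bic) :
    ∀ {b1 b2 b3 : B}, sRB E bic b1 b2 → sRB E bic b2 b3 → sRB E bic b1 b3 := by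
  rintro b1 b2 b3 ⟨a1, h11, h12, h13⟩ ⟨a2, h21, h22, h23⟩
  rcases hcmpA a2 a1 with hsub | hsub
  · have e13 : E a1 b3 := hsub _ h22
    by_cases hb : bic a1 b3
    · exact absurd ⟨a1, a2, b2, b3, fun h => h13 (h ▸ h21), fun h => h13 (h ▸ hb),
        h12, hbic _ _ h21, h22, e13, h13, h21, h23, hb⟩ noA
    · exact ⟨a1, h11, e13, hb⟩
  · have e21 : E a2 b1 := hsub _ (hbic _ _ h11)
    by_cases hb : bic a2 b1
    · exact ⟨a2, hb, h22, h23⟩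
    · exact absurd ⟨a2, a1, b1, b2, fun h => h13 (h.symm ▸ h21), fun h => h13 (h ▸ h11),
        e21, hbic _ _ h11, h12, hbic _ _ h21, hb, h11, h13, h21⟩ noA

lemma sRB_bicSub (hbic : ∀ a b, bic a b → E a b) (noB : ¬ PatternB E bic)
    {b b' : B} (h : sRB E bic b b') {a' : A} (hb : bic a' b') : E a' b := by
  obtain ⟨a, h1, h2, h3⟩ := h
  by_contra hne
  exact noB ⟨a, a', b, b', fun h => h3 (h ▸ hb), fun h => h3 (h ▸ h1),
    hbic _ _ h1, h2, hbic _ _ hb, hne, h1, h3, hb⟩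

/-- `A`-side versions, obtained from the flipped graph. -/
lemma sRA_trans (hbic : ∀ a b, bic a b → E a b)
    (hcmpB : ∀ b b' : B, (∀ a, E a b → E a b') ∨ (∀ a, E a b' → E a b))
    (noA' : ¬ PatternA (fun b a => E a b) (fun b a => bic a b)) :
    ∀ {a1 a2 a3 : A}, sRA E bic a1 a2 → sRA E bic a2 a3 → sRA E bic a1 a3 := by
  intro a1 a2 a3 h1 h2
  exact (sRB_trans (E := fun b a => E a b) (bic := fun b a => bic a b)
    (fun b a h => hbic a b h) hcmpB noA' (sRA_flip.mp h1) (sRA_flip.mp h2))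

lemma sRA_bicSub (hbic : ∀ a b, bic a b → E a b)
    (noB' : ¬ PatternB (fun b a => E a b) (fun b a => bic a b))
    {a a' : A} (h : sRA E bic a a') {b' : B} (hb : bic a' b') : E a b' :=
  sRB_bicSub (E := fun b a => E a b) (bic := fun b a => bic a b)
    (fun b a hh => hbic a b hh) noB' (sRA_flip.mp h) hb

/-! #### The order on `A` -/

lemma sSA_irrefl (a : A) : ¬ (sRA E bic a a ∨ sDA E bic a a) := by
  rintro (h | ⟨-, ⟨b, h1, h2⟩, -⟩)
  · exact sRA_irrefl a h
  · exact h2 h1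

lemma sSA_trans (hbic : ∀ a b, bic a b → E a b)
    (hcmpA : ∀ a a' : A, (∀ b, E a b → E a' b) ∨ (∀ b, E a' b → E a b))
    (hcmpB : ∀ b b' : B, (∀ a, E a b → E a b') ∨ (∀ a, E a b' → E a b))
    (noA : ¬ PatternA E bic)
    (noA' : ¬ PatternA (fun b a => E a b) (fun b a => bic a b)) :
    ∀ {x y z : A}, (sRA E bic x y ∨ sDA E bic x y) → (sRA E bic y z ∨ sDA E bic y z) →
      (sRA E bic x z ∨ sDA E bic x z) := by
  rintro x y z (hxy | hxy) (hyz | hyz)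
  · exact Or.inl (sRA_trans hbic hcmpB noA' hxy hyz)
  · -- RA ∘ DA
    obtain ⟨b0, hab0, hbb0, hnbb0⟩ := hxy
    obtain ⟨sub2, prop2, hnra2⟩ := hyz
    by_cases hc : E z b0
    · by_cases hcb : bic z b0
      · exact absurd ⟨b0, hcb, hbb0, hnbb0⟩ hnra2
      · exact Or.inl ⟨b0, hab0, hc, hcb⟩
    · refine Or.inr ⟨?_, ⟨b0, hbic _ _ hab0, hc⟩, ?_⟩
      · rcases hcmpA x z with hsub | hsub
        · exact absurd (hsub _ (hbic _ _ hab0)) hc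
        · exact hsub
      · rintro ⟨b1, hcb1, hab1, hnab1⟩
        have ebb1 : E y b1 := sub2 _ (hbic _ _ hcb1)
        have hbb1 : bic y b1 := by
          by_contra hcon
          exact hnra2 ⟨b1, hcb1, ebb1, hcon⟩
        exact noA ⟨x, y, b1, b0, fun h => hnbb0 (h ▸ hab0), fun h => hnab1 (h.symm ▸ hab0),
          hab1, ebb1, hbb0, hbic _ _ hab0, hnab1, hbb1, hnbb0, hab0⟩
  · -- DA ∘ RA
    obtain ⟨sub1, -, hnra1⟩ := hxy
    obtain ⟨b0, hbb0, hcb0, hncb0⟩ := hyz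
    have eab0 : E x b0 := sub1 _ (hbic _ _ hbb0)
    have hab0 : bic x b0 := by
      by_contra hcon
      exact hnra1 ⟨b0, hbb0, eab0, hcon⟩
    exact Or.inl ⟨b0, hab0, hcb0, hncb0⟩
  · -- DA ∘ DA
    obtain ⟨sub1, -, hnra1⟩ := hxy
    obtain ⟨sub2, ⟨x2, ex2, nex2⟩, hnra2⟩ := hyz
    refine Or.inr ⟨fun b hb => sub1 _ (sub2 _ hb), ⟨x2, sub1 _ ex2, nex2⟩, ?_⟩
    rintro ⟨b0, hc, ha, hna⟩
    have ebb0 : E y b0 := sub2 _ (hbic _ _ hc)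
    have hbb0 : bic y b0 := by
      by_contra hcon
      exact hnra2 ⟨b0, hc, ebb0, hcon⟩
    exact hnra1 ⟨b0, hbb0, ha, hna⟩

/-! #### The order on `B` -/

/-- A coupling constraint cannot be opposed by a special constraint:
this is exactly where pattern (C) is needed. -/
lemma sT_RB_false (hbic : ∀ a b, bic a b → E a b)
    (hcmpA : ∀ a a' : A, (∀ b, E a b → E a' b) ∨ (∀ b, E a' b → E a b))
    (noA : ¬ PatternA E bic)
    (noB' : ¬ PatternB (fun b a => E a b) (fun b a => bic a b))
    (noC : ¬ PatternC E bic)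
    {b c : B} (hT : sT E bic b c) (hRB : sRB E bic c b) : False := by
  obtain ⟨d, e, hde, hdb, hec, hndc⟩ := hT
  obtain ⟨a, hac, hab, hnab⟩ := hRB
  obtain ⟨f0, hdf, hef, hnef⟩ := id hde
  -- N(d) ⊆ N(e)
  have subde : ∀ x, E d x → E e x := by
    rcases hcmpA d e with hsub | hsub
    · exact hsub
    · exact absurd (hsub _ hec) hndc
  have eeb : E e b := subde _ hdb
  have nbec : ¬ bic e c := fun h => hndc (sRA_bicSub hbic noB' hde h)
  have nbeb : ¬ bic e b := by
    intro h
    obtain ⟨x, h1, -, h3⟩ :=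
      sRB_trans hbic hcmpA noA ⟨e, h, hec, nbec⟩ ⟨a, hac, hab, hnab⟩
    exact h3 h1
  have nbdb : ¬ bic d b := fun h =>
    hndc (sRA_bicSub hbic noB' (⟨b, h, hab, hnab⟩ : sRA E bic d a) hac)
  -- N(d) ⊆ N(a)
  have subda : ∀ x, E d x → E a x := by
    rcases hcmpA d a with hsub | hsub
    · exact hsub
    · exact absurd (hsub _ (hbic _ _ hac)) hndc
  have eaf : E a f0 := subda _ (hbic _ _ hdf)
  have bicaf : bic a f0 := by
    by_contra hcon
    exact hndc (sRA_bicSub hbic noB' (⟨f0, hdf, eaf, hcon⟩ : sRA E bic d a) hac)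
  exact noC ⟨a, d, e, b, c, f0,
    fun h => hndc (h ▸ hbic _ _ hac), fun h => nbec (h ▸ hac), fun h => hndc (h ▸ hec),
    fun h => hndc (h ▸ hdb), fun h => nbdb (h ▸ hdf), fun h => hndc (h ▸ hbic _ _ hdf),
    hab, hbic _ _ hac, eaf, hdb, hbic _ _ hdf, eeb, hec, hef, hndc,
    hac, bicaf, hdf, hnab, nbdb, nbeb, nbec, hnef⟩

lemma sSB_irrefl (b : B) : ¬ (sRB E bic b b ∨ sT E bic b b) := by
  rintro (h | ⟨d, e, -, h2, -, h4⟩)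
  · exact sRB_irrefl b h
  · exact h4 h2

lemma sSB_trans (hbic : ∀ a b, bic a b → E a b)
    (hcmpA : ∀ a a' : A, (∀ b, E a b → E a' b) ∨ (∀ b, E a' b → E a b))
    (noA : ¬ PatternA E bic)
    (noB' : ¬ PatternB (fun b a => E a b) (fun b a => bic a b))
    (noC : ¬ PatternC E bic) :
    ∀ {x y z : B}, (sRB E bic x y ∨ sT E bic x y) → (sRB E bic y z ∨ sT E bic y z) →
      (sRB E bic x z ∨ sT E bic x z) := by
  rintro b1 b2 b3 (hxy | hxy) (hyz | hyz)
  · exact Or.inl (sRB_trans hbic hcmpA noA hxy hyz)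
  · -- RB ∘ T
    obtain ⟨a, hab1, hab2, hnab2⟩ := hxy
    obtain ⟨d, e, hde, hdb2, heb3, hndb3⟩ := hyz
    by_cases hdb1 : E d b1
    · exact Or.inr ⟨d, e, hde, hdb1, heb3, hndb3⟩
    · by_cases hab3 : E a b3
      · by_cases hb : bic a b3
        · exact absurd (sT_RB_false hbic hcmpA noA noB' noC
            ⟨d, e, hde, hdb2, heb3, hndb3⟩ ⟨a, hb, hab2, hnab2⟩) id
        · exact Or.inl ⟨a, hab1, hab3, hb⟩
      · have subae : ∀ x, E a x → E e x := by
          rcases hcmpA a e with hsub | hsub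
          · exact hsub
          · exact absurd (hsub _ heb3) hab3
        have eeb1 : E e b1 := subae _ (hbic _ _ hab1)
        by_cases hb : bic e b1
        · exact absurd (sRA_bicSub hbic noB' hde hb) hdb1
        · exact Or.inr ⟨a, e, ⟨b1, hab1, eeb1, hb⟩, hbic _ _ hab1, heb3, hab3⟩
  · -- T ∘ RB
    obtain ⟨d, e, hde, hdb1, heb2, hndb2⟩ := hxy
    obtain ⟨a, hab2, hab3, hnab3⟩ := hyz
    obtain ⟨f0, hdf, hef, hnef⟩ := id hde
    have subda : ∀ x, E d x → E a x := by
      rcases hcmpA d a with hsub | hsub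
      · exact hsub
      · exact absurd (hsub _ (hbic _ _ hab2)) hndb2
    have eab1 : E a b1 := subda _ hdb1
    have eaf : E a f0 := subda _ (hbic _ _ hdf)
    have bicaf : bic a f0 := by
      by_contra hcon
      exact hndb2 (sRA_bicSub hbic noB' (⟨f0, hdf, eaf, hcon⟩ : sRA E bic d a) hab2)
    by_cases hb1 : bic a b1
    · exact Or.inl ⟨a, hb1, hab3, hnab3⟩
    · -- pattern C on (a, d, e, b1, b2, f0)
      have subde : ∀ x, E d x → E e x := by
        rcases hcmpA d e with hsub | hsub
        · exact hsub
        · exact absurd (hsub _ heb2) hndb2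
      have eeb1 : E e b1 := subde _ hdb1
      have nbeb2 : ¬ bic e b2 := fun h => hndb2 (sRA_bicSub hbic noB' hde h)
      have nbeb1 : ¬ bic e b1 := by
        intro h
        obtain ⟨x, h1, -, h3⟩ :=
          sRB_trans hbic hcmpA noA ⟨e, h, heb2, nbeb2⟩ ⟨a, hab2, eab1, hb1⟩
        exact h3 h1
      have nbdb1 : ¬ bic d b1 := fun h =>
        hndb2 (sRA_bicSub hbic noB' (⟨b1, h, eab1, hb1⟩ : sRA E bic d a) hab2)
      exact absurd (⟨a, d, e, b1, b2, f0,
        fun h => hndb2 (h ▸ hbic _ _ hab2), fun h => nbeb2 (h ▸ hab2),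
        fun h => hndb2 (h ▸ heb2),
        fun h => hndb2 (h ▸ hdb1), fun h => nbdb1 (h ▸ hdf),
        fun h => hndb2 (h ▸ hbic _ _ hdf),
        eab1, hbic _ _ hab2, eaf, hdb1, hbic _ _ hdf, eeb1, heb2, hef, hndb2,
        hab2, bicaf, hdf, hb1, nbdb1, nbeb1, nbeb2, hnef⟩ : PatternC E bic) noC
  · -- T ∘ T
    obtain ⟨d, e, hde, hdb1, heb2, hndb2⟩ := hxy
    obtain ⟨d', e', hde', hd'b2, he'b3, hnd'b3⟩ := hyz
    have subdd' : ∀ x, E d x → E d' x := by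
      rcases hcmpA d d' with hsub | hsub
      · exact hsub
      · exact absurd (hsub _ hd'b2) hndb2
    exact Or.inr ⟨d', e', hde', subdd' _ hdb1, he'b3, hnd'b3⟩

end Backward

end Statement19Aux

open Statement19Aux

/-- a weakly balanced bipartite signed graph (no purely red edges) whose
underlying graph is a bipartite chain graph (no induced `2K_2`) has a special min
ordering if and only if it contains none of the forbidden induced subgraphs (A), (B),
(C) (in either orientation of the two parts). -/
theorem statement19 [Fintype A] [Fintype B] (E bic : A → B → Prop)
    (hbic : ∀ a b, bic a b → E a b)
    (hchaingraph : ¬ ∃ (a a' : A) (b b' : B), E a b ∧ E a' b' ∧ ¬ E a b' ∧ ¬ E a' b) :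
    (∃ (ltA : A → A → Prop) (ltB : B → B → Prop), IsSpecialMinOrdering E bic ltA ltB) ↔
      ¬ (PatternA E bic ∨ PatternA (fun b a => E a b) (fun b a => bic a b) ∨
         PatternB E bic ∨ PatternB (fun b a => E a b) (fun b a => bic a b) ∨
         PatternC E bic ∨ PatternC (fun b a => E a b) (fun b a => bic a b)) := by
  constructor
  · rintro ⟨ltA, ltB, h⟩ hpat
    have hflip := smo_flip h
    rcases hpat with h1 | h2 | h3 | h4 | h5 | h6
    · exact smo_noA h h1
    · exact smo_noA hflip h2
    · exact smo_noB h h3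
    · exact smo_noB hflip h4
    · exact smo_noC h h5
    · exact smo_noC hflip h6
  · intro hnp
    have noA : ¬ PatternA E bic := fun h => hnp (Or.inl h)
    have noA' : ¬ PatternA (fun b a => E a b) (fun b a => bic a b) :=
      fun h => hnp (Or.inr (Or.inl h))
    have noB : ¬ PatternB E bic := fun h => hnp (Or.inr (Or.inr (Or.inl h)))
    have noB' : ¬ PatternB (fun b a => E a b) (fun b a => bic a b) :=
      fun h => hnp (Or.inr (Or.inr (Or.inr (Or.inl h))))
    have noC : ¬ PatternC E bic := fun h => hnp (Or.inr (Or.inr (Or.inr (Or.inr (Or.inl h)))))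
    have noC' : ¬ PatternC (fun b a => E a b) (fun b a => bic a b) :=
      fun h => hnp (Or.inr (Or.inr (Or.inr (Or.inr (Or.inr h)))))
    -- comparability of neighbourhoods (chain graph)
    have hcmpA : ∀ a a' : A, (∀ b, E a b → E a' b) ∨ (∀ b, E a' b → E a b) := by
      intro a a'
      by_contra hcon
      push_neg at hcon
      obtain ⟨⟨b, hab, hnab⟩, ⟨b', hab', hnab'⟩⟩ := hcon
      exact hchaingraph ⟨a, a', b, b', hab, hab', fun h => hnab' h, fun h => hnab h⟩
    have hcmpB : ∀ b b' : B, (∀ a, E a b → E a b') ∨ (∀ a, E a b' → E a b) := by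
      intro b b'
      by_contra hcon
      push_neg at hcon
      obtain ⟨⟨a, hab, hnab⟩, ⟨a', hab', hnab'⟩⟩ := hcon
      exact hchaingraph ⟨a, a', b, b', hab, hab', fun h => hnab h, fun h => hnab' h⟩
    -- the strict partial order on A and its linear extension
    obtain ⟨ltA, stoA, hextA⟩ :=
      exists_sto_ext (fun a a' => sRA E bic a a' ∨ sDA E bic a a')
        sSA_irrefl (fun _ _ _ h1 h2 => sSA_trans hbic hcmpA hcmpB noA noA' h1 h2)
    -- the strict partial order on B and its linear extension
    obtain ⟨ltB, stoB, hextB⟩ :=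
      exists_sto_ext (fun b b' => sRB E bic b b' ∨ sT E bic b b')
        sSB_irrefl (fun _ _ _ h1 h2 => sSB_trans hbic hcmpA noA noB' noC h1 h2)
    refine ⟨ltA, ltB, ⟨stoA, stoB, ?_⟩,
      fun a b b' h1 h2 h3 => hextB _ _ (Or.inl ⟨a, h1, h2, h3⟩),
      fun b a a' h1 h2 h3 => hextA _ _ (Or.inl ⟨b, h1, h2, h3⟩)⟩
    -- the min-ordering condition
    intro a a' b b' hab ha'b' haa' hb'b
    by_contra hnab'
    -- a is forced before a' and N(a) ⊊ N(a'), hence sRA a a'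
    have hRA : sRA E bic a a' := by
      by_contra hcon
      have hsub : ∀ x, E a x → E a' x := by
        rcases hcmpA a a' with hsub | hsub
        · exact hsub
        · exact absurd (hsub _ ha'b') hnab'
      have : ltA a' a := hextA _ _ (Or.inr ⟨hsub, ⟨b', ha'b', hnab'⟩, hcon⟩)
      exact sto_asymm stoA haa' this
    have : ltB b b' := hextB _ _ (Or.inr ⟨a, a', hRA, hab, ha'b', hnab'⟩)
    exact sto_asymm stoB this hb'b
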